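/- arXiv:2305.16783 — 2 statements merged into one kernel-verified Lean document; each statement's English description precedes it below -/
import Mathlib

section
/- Let X and Y be real separable Banach spaces with X reflexive, let A : X → Y' satisfy property (H2) with witness map Φ ∈ B(X,Y), and let b ∈ Y'. Then every sequence (x_n) in X satisfying ⟨A(x_n), Φ(x_n)⟩ = ⟨b, Φ(x_n)⟩ for all n (in particular, every sequence of discrete solutions x_n ∈ X_n of the finite-dimensional problems tested against Y_n := Φ(X_n)) is bounded in X. -/
open Filter Topology

noncomputable section

/-- The filter of elements of a normed space whose norm tends to infinity. -/
def normAtTop (X : Type*) [Norm X] : Filter X :=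
  Filter.comap (fun x => ‖x‖) Filter.atTop

/-- `N(Φ) := limsup_{‖x‖ → ∞} ‖Φ x‖ / ‖x‖ ∈ [0, +∞]`. -/
def Nval {X Y : Type*} [Norm X] [Norm Y] (Φ : X → Y) : EReal :=
  Filter.limsup (fun x => ((‖Φ x‖ / ‖x‖ : ℝ) : EReal)) (normAtTop X)

/-- `Φ ∈ B(X, Y)`: continuous, surjective, and `N(Φ) < ∞`. -/
def MemB {X Y : Type*} [NormedAddCommGroup X] [NormedAddCommGroup Y]
    (Φ : X → Y) : Prop :=
  Continuous Φ ∧ Function.Surjective Φ ∧ Nval Φ < ⊤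

/-- Property (H1): weak convergence `xₙ ⇀ x` in `X` implies `A xₙ ⇀* A x` in `Y'`
and boundedness of the images. -/
def PropH1 {X Y : Type*} [NormedAddCommGroup X] [NormedSpace ℝ X]
    [NormedAddCommGroup Y] [NormedSpace ℝ Y]
    (A : X → StrongDual ℝ Y) : Prop :=
  ∀ (u : ℕ → X) (x : X),
    (∀ f : StrongDual ℝ X, Tendsto (fun n => f (u n)) atTop (𝓝 (f x))) →
      (∀ y : Y, Tendsto (fun n => A (u n) y) atTop (𝓝 (A x y))) ∧
        ∃ C : ℝ, ∀ n, ‖A (u n)‖ ≤ C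

/-- Property (H2) with witness `Φ`: mapped coercivity,
`liminf_{‖x‖ → ∞} ⟨A x, Φ x⟩ / ‖x‖ = +∞`. -/
def PropH2 {X Y : Type*} [NormedAddCommGroup X] [NormedSpace ℝ X]
    [NormedAddCommGroup Y] [NormedSpace ℝ Y]
    (A : X → StrongDual ℝ Y) (Φ : X → Y) : Prop :=
  Filter.liminf (fun x => ((A x (Φ x) / ‖x‖ : ℝ) : EReal)) (normAtTop X) = ⊤

/-- Under (H2) with witness `Φ ∈ B(X,Y)`, every sequence `(xₙ)` with
`⟨A xₙ, Φ xₙ⟩ = ⟨b, Φ xₙ⟩` for all `n` is bounded in `X`. -/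
theorem statement3
    {X Y : Type*} [NormedAddCommGroup X] [NormedSpace ℝ X] [CompleteSpace X]
    [TopologicalSpace.SeparableSpace X]
    [NormedAddCommGroup Y] [NormedSpace ℝ Y] [CompleteSpace Y]
    [TopologicalSpace.SeparableSpace Y]
    (hrefl : Function.Surjective (NormedSpace.inclusionInDoubleDual ℝ X))
    (A : X → StrongDual ℝ Y) (Φ : X → Y)
    (hΦ : MemB Φ) (hH2 : PropH2 A Φ)
    (b : StrongDual ℝ Y)
    (x : ℕ → X) (hx : ∀ n, A (x n) (Φ (x n)) = b (Φ (x n))) :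
    ∃ C : ℝ, ∀ n, ‖x n‖ ≤ C := by
  by_contra hC
  push_neg at hC
  -- extract a subsequence with norms tending to infinity
  choose k hk using fun m : ℕ => hC m
  have hnorm : Tendsto (fun m => ‖x (k m)‖) atTop atTop := by
    apply tendsto_atTop_mono (fun m => (hk m).le) tendsto_natCast_atTop_atTop
  have hsub : Tendsto (fun m => x (k m)) atTop (normAtTop X) := by
    rw [normAtTop, tendsto_comap_iff]
    exact hnorm
  -- get a real bound M on the limsup of ‖Φ x‖/‖x‖
  obtain ⟨-, -, hN⟩ := hΦ
  obtain ⟨M, hM1, -⟩ := EReal.lt_iff_exists_real_btwn.mp hN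
  have hMev : ∀ᶠ z in normAtTop X, ((‖Φ z‖ / ‖z‖ : ℝ) : EReal) < (M : EReal) :=
    eventually_lt_of_limsup_lt hM1
  set c : ℝ := ‖b‖ * M with hc
  have hlt : (c : EReal) < Filter.liminf (fun z => ((A z (Φ z) / ‖z‖ : ℝ) : EReal)) (normAtTop X) := by
    rw [hH2]; exact EReal.coe_lt_top c
  have hcev : ∀ᶠ z in normAtTop X, (c : EReal) < ((A z (Φ z) / ‖z‖ : ℝ) : EReal) :=
    eventually_lt_of_lt_liminf hlt ⟨⊥, eventually_map.2 (Eventually.of_forall fun _ => bot_le)⟩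
  have h1 : ∀ᶠ m in atTop, (c : EReal) < ((A (x (k m)) (Φ (x (k m))) / ‖x (k m)‖ : ℝ) : EReal) :=
    hsub.eventually hcev
  have h2 : ∀ᶠ m in atTop, ((‖Φ (x (k m))‖ / ‖x (k m)‖ : ℝ) : EReal) < (M : EReal) :=
    hsub.eventually hMev
  have h3 : ∀ᶠ m in atTop, (0 : ℝ) < ‖x (k m)‖ := hnorm.eventually_gt_atTop 0
  obtain ⟨m, hm1, hm2, hm3⟩ := (h1.and (h2.and h3)).exists
  rw [EReal.coe_lt_coe_iff] at hm1 hm2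
  set z := x (k m)
  have hb : b (Φ z) ≤ ‖b‖ * ‖Φ z‖ := by
    have h := b.le_opNorm (Φ z)
    rw [Real.norm_eq_abs] at h
    exact (le_abs_self _).trans h
  have : A z (Φ z) / ‖z‖ ≤ ‖b‖ * M := by
    rw [hx (k m)]
    calc b (Φ z) / ‖z‖ ≤ ‖b‖ * ‖Φ z‖ / ‖z‖ := by
          exact div_le_div_of_nonneg_right hb hm3.le |>.trans_eq rfl
      _ = ‖b‖ * (‖Φ z‖ / ‖z‖) := by ring
      _ ≤ ‖b‖ * M := mul_le_mul_of_nonneg_left hm2.le (norm_nonneg b)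
  exact absurd hm1 (not_lt.mpr (this.trans_eq hc.symm))
end
end

section
/- Let X and Y be real separable Banach spaces, X reflexive, and let A : X → Y' be a bounded linear operator. Suppose there exists a bounded linear surjective map Φ : X → Y with liminf_{‖x‖_X → ∞} ⟨Ax, Φx⟩/‖x‖_X = +∞ (property (H2) with linear Φ). Then A is injective and Φ is injective. -/
open Filter Topology

noncomputable section

/-- If a bounded linear operator `A : X → Y'` satisfies (H2) with a bounded linear
surjective `Φ : X → Y`, then both `A` and `Φ` are injective. -/
theorem statement13
    {X Y : Type*} [NormedAddCommGroup X] [NormedSpace ℝ X] [CompleteSpace X]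
    [TopologicalSpace.SeparableSpace X]
    [NormedAddCommGroup Y] [NormedSpace ℝ Y] [CompleteSpace Y]
    [TopologicalSpace.SeparableSpace Y]
    (hrefl : Function.Surjective (NormedSpace.inclusionInDoubleDual ℝ X))
    (A : X →L[ℝ] StrongDual ℝ Y) (Φ : X →L[ℝ] Y)
    (hsurj : Function.Surjective Φ)
    (hH2 : Filter.liminf (fun x => ((A x (Φ x) / ‖x‖ : ℝ) : EReal)) (normAtTop X) = ⊤) :
    Function.Injective A ∧ Function.Injective Φ := by
  -- Key: no nonzero x₀ can have ⟨A x₀, Φ x₀⟩ = 0.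
  have key : ∀ x₀ : X, x₀ ≠ 0 → (A x₀) (Φ x₀) = 0 → False := by
    intro x₀ hx₀ hpair
    have hpos : ∀ᶠ x in normAtTop X, (0 : EReal) < ((A x (Φ x) / ‖x‖ : ℝ) : EReal) := by
      apply Filter.eventually_lt_of_lt_liminf
      · rw [hH2]; exact lt_top_iff_ne_top.mpr (by simp)
      · exact Filter.isBoundedUnder_of ⟨⊥, fun x => bot_le⟩
    rw [normAtTop, Filter.eventually_comap] at hpos
    rw [Filter.eventually_atTop] at hpos
    obtain ⟨M, hM⟩ := hpos
    have hnorm : 0 < ‖x₀‖ := norm_pos_iff.mpr hx₀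
    set t : ℝ := max (M / ‖x₀‖) 1 with ht
    have htpos : 0 < t := lt_of_lt_of_le one_pos (le_max_right _ _)
    set x : X := t • x₀ with hx
    have hxnorm : ‖x‖ = t * ‖x₀‖ := by
      rw [hx, norm_smul, Real.norm_eq_abs, abs_of_pos htpos]
    have hge : M ≤ ‖x‖ := by
      rw [hxnorm]
      calc M = (M / ‖x₀‖) * ‖x₀‖ := by field_simp
        _ ≤ t * ‖x₀‖ := by
            apply mul_le_mul_of_nonneg_right (le_max_left _ _) hnorm.le
    have := hM ‖x‖ hge x rfl
    have hzero : (A x) (Φ x) = 0 := by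
      rw [hx, map_smul, map_smul]
      simp [hpair]
    rw [hzero] at this
    simp at this
  constructor
  · intro a b hab
    by_contra hne
    have hsub : a - b ≠ 0 := sub_ne_zero.mpr hne
    apply key (a - b) hsub
    have : A (a - b) = 0 := by rw [map_sub, hab, sub_self]
    rw [this]; rfl
  · intro a b hab
    by_contra hne
    have hsub : a - b ≠ 0 := sub_ne_zero.mpr hne
    apply key (a - b) hsub
    have : Φ (a - b) = 0 := by rw [map_sub, hab, sub_self]
    rw [this, map_zero]
end
end
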